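/- The quotient group ℓ^∞(ℤ,ℤ)_S = ℓ^∞(ℤ,ℤ)/{ a − Sa : a ∈ ℓ^∞(ℤ,ℤ) } is divisible, torsion-free (hence a rational vector space), and uncountable. -/

import Mathlib

noncomputable section

/-- `ℓ∞(ℤ,ℤ)`: the additive group of bounded `ℤ`-valued functions on `ℤ`. -/
def bddZ : AddSubgroup (ℤ → ℤ) where
  carrier := {a | ∃ C : ℤ, ∀ k, |a k| ≤ C}
  add_mem' := by
    rintro a b ⟨C, hC⟩ ⟨D, hD⟩
    exact ⟨C + D, fun k => (abs_add_le _ _).trans (add_le_add (hC k) (hD k))⟩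
  zero_mem' := ⟨0, fun k => by simp⟩
  neg_mem' := by
    rintro a ⟨C, hC⟩
    exact ⟨C, fun k => by simpa using hC k⟩

/-- The shift `(Sa)(k) = a(k-1)` on `ℓ∞(ℤ,ℤ)`. -/
def shiftHom : bddZ →+ bddZ where
  toFun a := ⟨fun k => a.val (k - 1), by
    obtain ⟨C, hC⟩ := a.2
    exact ⟨C, fun k => hC (k - 1)⟩⟩
  map_zero' := rfl
  map_add' := fun a b => rfl

/-- The coinvariants `ℓ∞(ℤ,ℤ)_S = ℓ∞(ℤ,ℤ)/{a - Sa : a ∈ ℓ∞(ℤ,ℤ)}`, the quotient of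
`ℓ∞(ℤ,ℤ)` by the image of the homomorphism `1 - S`. -/
abbrev bddZCoinv := bddZ ⧸ (AddMonoidHom.id bddZ - shiftHom).range

/-- Partial sums of a two-sided sequence, normalized so `psum b 0 = 0` and
`psum b m - psum b (m-1) = b m`. -/
def psum (b : ℤ → ℤ) (m : ℤ) : ℤ :=
  if 0 ≤ m then ∑ k ∈ Finset.range m.toNat, b (k + 1)
  else -∑ k ∈ Finset.range (-m).toNat, b (-(k : ℤ))

lemma psum_zero (b : ℤ → ℤ) : psum b 0 = 0 := by simp [psum]

lemma psum_step (b : ℤ → ℤ) (m : ℤ) : psum b m = psum b (m - 1) + b m := by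
  rcases lt_trichotomy m 0 with hm | hm | hm
  · have h1 : ¬ (0 ≤ m) := by omega
    have h2 : ¬ (0 ≤ m - 1) := by omega
    have h3 : (-(m - 1)).toNat = (-m).toNat + 1 := by omega
    rw [psum, psum, if_neg h1, if_neg h2, h3, Finset.sum_range_succ]
    have h4 : (-((-m).toNat : ℤ)) = m := by omega
    rw [h4]; ring
  · subst hm
    have h1 : psum b (-1) = -b 0 := by
      rw [psum, if_neg (by omega)]; norm_num
    rw [psum_zero, show (0:ℤ) - 1 = -1 by norm_num, h1]; ring
  · have h1 : (0:ℤ) ≤ m := le_of_lt hm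
    have h2 : (0:ℤ) ≤ m - 1 := by omega
    have h3 : m.toNat = (m-1).toNat + 1 := by omega
    rw [psum, psum, if_pos h1, if_pos h2, h3, Finset.sum_range_succ]
    have h4 : ((m-1).toNat : ℤ) + 1 = m := by omega
    rw [h4]

lemma psum_eq {b a : ℤ → ℤ} (h : ∀ k, b k = a k - a (k - 1)) :
    ∀ m, psum b m = a m - a 0 := by
  intro m
  induction m using Int.induction_on with
  | zero => simp [psum_zero]
  | succ i ih =>
      have hs := psum_step b (i + 1)
      rw [show ((i:ℤ) + 1 - 1) = i by ring] at hs
      have hk := h ((i:ℤ)+1)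
      rw [show ((i:ℤ) + 1 - 1) = i by ring] at hk
      rw [hs, ih, hk]; ring
  | pred i ih =>
      have hs := psum_step b (-(i:ℤ))
      have hk := h (-(i:ℤ))
      rw [show (-(i:ℤ) - 1) = -((i:ℤ)+1) by ring] at hs hk
      have e : -(i:ℤ) - 1 = -((i:ℤ)+1) := by ring
      rw [e]
      linarith

lemma psum_smul (n : ℤ) (b : ℤ → ℤ) (m : ℤ) :
    psum (fun k => n * b k) m = n * psum b m := by
  induction m using Int.induction_on with
  | zero => simp [psum_zero]
  | succ i ih =>
      rw [psum_step _ (i+1), psum_step b (i+1),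
        show ((i:ℤ) + 1 - 1) = i by ring, ih]
      ring
  | pred i ih =>
      have h1 := psum_step (fun k => n * b k) (-(i:ℤ))
      have h2 := psum_step b (-(i:ℤ))
      rw [show (-(i:ℤ) - 1) = -((i:ℤ)+1) by ring] at h1 h2
      have e : -(i:ℤ) - 1 = -((i:ℤ)+1) := by ring
      rw [e]
      linear_combination ih - h1 + n * h2

lemma const_diff {f a : ℤ → ℤ} (h : ∀ k, f k - f (k - 1) = a k - a (k - 1)) :
    ∀ m, f m - f 0 = a m - a 0 := by
  intro m
  induction m using Int.induction_on with
  | zero => ring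
  | succ i ih =>
      have hk := h ((i:ℤ) + 1)
      rw [show ((i:ℤ) + 1 - 1) = i by ring] at hk
      linarith
  | pred i ih =>
      have hk := h (-(i:ℤ))
      rw [show (-(i:ℤ) - 1) = -((i:ℤ)+1) by ring] at hk
      have e : -(i:ℤ) - 1 = -((i:ℤ)+1) := by ring
      rw [e]
      linarith

/-- Membership in the range of `1 - S`. -/
lemma mem_range_iff (b : bddZ) :
    b ∈ (AddMonoidHom.id bddZ - shiftHom).range ↔
      ∃ a : bddZ, ∀ k, b.val k = a.val k - a.val (k - 1) := by
  constructor
  · rintro ⟨a, rfl⟩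
    exact ⟨a, fun k => rfl⟩
  · rintro ⟨a, ha⟩
    refine ⟨a, ?_⟩
    ext k
    exact (ha k).symm

/-- If the partial sums of `b` are bounded, then `b` is in the range of `1 - S`. -/
lemma mem_range_of_bdd_psum (b : bddZ) (C : ℤ) (hC : ∀ m, |psum b.val m| ≤ C) :
    b ∈ (AddMonoidHom.id bddZ - shiftHom).range := by
  rw [mem_range_iff]
  refine ⟨⟨psum b.val, ⟨C, hC⟩⟩, fun k => ?_⟩
  have := psum_step b.val k
  simp only
  linarith

/-- STATEMENT 16: the quotient group `ℓ∞(ℤ,ℤ)_S` is divisible, torsion-free (hence a rational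
vector space) and uncountable. -/
theorem stmt16 :
    (∀ x : bddZCoinv, ∀ n : ℕ, 0 < n → ∃ y : bddZCoinv, n • y = x) ∧
    (∀ x : bddZCoinv, ∀ n : ℕ, 0 < n → n • x = 0 → x = 0) ∧
    ¬ Countable bddZCoinv := by
  refine ⟨?_, ?_, ?_⟩
  · -- divisible
    intro x n hn
    obtain ⟨b, rfl⟩ := QuotientAddGroup.mk_surjective x
    obtain ⟨C, hC⟩ := b.2
    set N : ℤ := (n : ℤ) with hN
    have hN1 : 1 ≤ N := by rw [hN]; exact_mod_cast hn
    set p : ℤ → ℤ := psum b.val with hp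
    have hcbdd : ∀ k, |p k / N - p (k - 1) / N| ≤ C + N := by
      intro k
      have e1 : N * (p k / N) + p k % N = p k := Int.mul_ediv_add_emod _ _
      have e2 : N * (p (k-1) / N) + p (k-1) % N = p (k-1) := Int.mul_ediv_add_emod _ _
      have hstep : p k = p (k - 1) + b.val k := psum_step b.val k
      have hr1 : 0 ≤ p k % N := Int.emod_nonneg _ (by omega)
      have hr2 : p k % N < N := Int.emod_lt_of_pos _ (by omega)
      have hr3 : 0 ≤ p (k-1) % N := Int.emod_nonneg _ (by omega)
      have hr4 : p (k-1) % N < N := Int.emod_lt_of_pos _ (by omega)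
      have habs := abs_le.mp (hC k)
      rw [abs_le]
      constructor
      · nlinarith [habs.1, habs.2]
      · nlinarith [habs.1, habs.2]
    set c : bddZ := ⟨fun k => p k / N - p (k - 1) / N, ⟨C + N, hcbdd⟩⟩ with hc
    refine ⟨QuotientAddGroup.mk c, ?_⟩
    have hmk : (n • QuotientAddGroup.mk c : bddZCoinv) = QuotientAddGroup.mk (n • c) := rfl
    rw [hmk, QuotientAddGroup.eq_iff_sub_mem, mem_range_iff]
    refine ⟨⟨fun m => N * (p m / N) - p m, ⟨N, ?_⟩⟩, ?_⟩
    · intro m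
      show |N * (p m / N) - p m| ≤ N
      have e1 : N * (p m / N) + p m % N = p m := Int.mul_ediv_add_emod _ _
      have hr1 : 0 ≤ p m % N := Int.emod_nonneg _ (by omega)
      have hr2 : p m % N < N := Int.emod_lt_of_pos _ (by omega)
      rw [abs_le]; omega
    · intro k
      show ((n • c - b : bddZ) : ℤ → ℤ) k =
        (N * (p k / N) - p k) - (N * (p (k-1) / N) - p (k-1))
      have hstep : p k = p (k - 1) + b.val k := psum_step b.val k
      have hv : ((n • c - b : bddZ) : ℤ → ℤ) k = N * (p k / N - p (k - 1) / N) - b.val k := by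
        have h1 : ((n • c - b : bddZ) : ℤ → ℤ) k = (n • c : bddZ).val k - b.val k := rfl
        have h2 : (n • c : bddZ).val k = (n : ℤ) * c.val k := by
          have : (n • c : bddZ).val = n • (c.val) := rfl
          rw [this, Pi.smul_apply, nsmul_eq_mul]
        rw [h1, h2]
      rw [hv]
      linarith
  · -- torsion-free
    intro x n hn hx
    obtain ⟨b, rfl⟩ := QuotientAddGroup.mk_surjective x
    have hx' : (QuotientAddGroup.mk (n • b) : bddZCoinv) = 0 := by rw [← hx]; rfl
    rw [QuotientAddGroup.eq_zero_iff] at hx' ⊢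
    rw [mem_range_iff] at hx'
    obtain ⟨a, ha⟩ := hx'
    obtain ⟨D, hD⟩ := a.2
    have hN1 : 1 ≤ (n:ℤ) := by exact_mod_cast hn
    have ha' : ∀ k, (n:ℤ) * b.val k = a.val k - a.val (k - 1) := by
      intro k
      have h1 : (n • b : bddZ).val k = (n : ℤ) * b.val k := by
        have : (n • b : bddZ).val = n • (b.val) := rfl
        rw [this, Pi.smul_apply, nsmul_eq_mul]
      rw [← h1]
      exact ha k
    have hps : ∀ m, psum (fun k => (n:ℤ) * b.val k) m = a.val m - a.val 0 := psum_eq ha'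
    have hbdd : ∀ m, |psum b.val m| ≤ 2 * D := by
      intro m
      have h1 : (n:ℤ) * psum b.val m = a.val m - a.val 0 := by
        rw [← psum_smul]; exact hps m
      have h2 : |(n:ℤ) * psum b.val m| ≤ 2 * D := by
        rw [h1]
        refine (abs_sub _ _).trans ?_
        have := hD m; have := hD 0; omega
      have h3 : |(n:ℤ) * psum b.val m| = (n:ℤ) * |psum b.val m| := by
        rw [abs_mul, abs_of_nonneg (by positivity : (0:ℤ) ≤ ((n:ℕ):ℤ))]
      have h4 : |psum b.val m| ≤ (n:ℤ) * |psum b.val m| :=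
        le_mul_of_one_le_left (abs_nonneg _) hN1
      linarith [h2, h3, h4]
    exact mem_range_of_bdd_psum b (2 * D) hbdd
  · -- uncountable
    intro hcount
    have Fbdd : ∀ α : ℝ, ∀ k : ℤ, |⌊((k:ℝ) + 1) * α⌋ - ⌊(k:ℝ) * α⌋| ≤ ⌈|α|⌉ + 1 := by
      intro α k
      have h1 : ((k:ℝ) + 1) * α - 1 < ⌊((k:ℝ) + 1) * α⌋ := Int.sub_one_lt_floor _
      have h2 : (⌊((k:ℝ) + 1) * α⌋ : ℝ) ≤ ((k:ℝ) + 1) * α := Int.floor_le _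
      have h3 : (k:ℝ) * α - 1 < ⌊(k:ℝ) * α⌋ := Int.sub_one_lt_floor _
      have h4 : (⌊(k:ℝ) * α⌋ : ℝ) ≤ (k:ℝ) * α := Int.floor_le _
      have h5 : |α| ≤ (⌈|α|⌉ : ℝ) := Int.le_ceil _
      have h6 : α ≤ |α| := le_abs_self α
      have h7 : -|α| ≤ α := neg_abs_le α
      rw [abs_le]
      constructor
      · have : ((-(⌈|α|⌉ + 1) : ℤ) : ℝ) ≤ ((⌊((k:ℝ) + 1) * α⌋ - ⌊(k:ℝ) * α⌋ : ℤ) : ℝ) := by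
          push_cast; nlinarith
        exact_mod_cast this
      · have : ((⌊((k:ℝ) + 1) * α⌋ - ⌊(k:ℝ) * α⌋ : ℤ) : ℝ) ≤ ((⌈|α|⌉ + 1 : ℤ) : ℝ) := by
          push_cast; nlinarith
        exact_mod_cast this
    set F : ℝ → bddZ := fun α =>
      ⟨fun k => ⌊((k:ℝ) + 1) * α⌋ - ⌊(k:ℝ) * α⌋, ⟨⌈|α|⌉ + 1, Fbdd α⟩⟩ with hF
    have key : ∀ α β : ℝ,
        (QuotientAddGroup.mk (F α) : bddZCoinv) = QuotientAddGroup.mk (F β) → α ≤ β := by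
      intro α β h
      by_contra hab
      push_neg at hab
      rw [QuotientAddGroup.eq_iff_sub_mem, mem_range_iff] at h
      obtain ⟨a, ha⟩ := h
      obtain ⟨D, hD⟩ := a.2
      set g : ℤ → ℤ := fun k => ⌊((k:ℝ) + 1) * α⌋ - ⌊((k:ℝ) + 1) * β⌋ with hg
      have hgd : ∀ k, g k - g (k - 1) = a.val k - a.val (k - 1) := by
        intro k
        have hha := ha k
        have hval : ((F α - F β : bddZ) : ℤ → ℤ) k =
            (⌊((k:ℝ) + 1) * α⌋ - ⌊(k:ℝ) * α⌋) - (⌊((k:ℝ) + 1) * β⌋ - ⌊(k:ℝ) * β⌋) := rfl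
        rw [hval] at hha
        have e : (((k - 1 : ℤ)):ℝ) + 1 = (k:ℝ) := by push_cast; ring
        have hg1 : g (k - 1) = ⌊(k:ℝ) * α⌋ - ⌊(k:ℝ) * β⌋ := by
          simp only [hg, e]
        have hg2 : g k = ⌊((k:ℝ) + 1) * α⌋ - ⌊((k:ℝ) + 1) * β⌋ := rfl
        rw [hg1, hg2]
        linarith
      have hgb := const_diff hgd
      have hgbd : ∀ m, (g m : ℝ) ≤ ((2 * D + |g 0| : ℤ) : ℝ) := by
        intro m
        have h1 := hgb m
        have h2 : |a.val m - a.val 0| ≤ 2 * D := by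
          refine (abs_sub _ _).trans ?_
          have := hD m; have := hD 0; omega
        have h3 := abs_le.mp h2
        have h5 := le_abs_self (g 0)
        have : g m ≤ 2 * D + |g 0| := by linarith
        exact_mod_cast this
      set E : ℤ := 2 * D + |g 0| with hE
      obtain ⟨n, hn⟩ := exists_nat_gt (((E : ℝ) + 2) / (α - β))
      have hpos : (0:ℝ) < α - β := by linarith
      have hlarge : ((E:ℝ) + 2) < (n : ℝ) * (α - β) := by
        rw [div_lt_iff₀ hpos] at hn
        linarith
      have hfloor : ((n:ℝ)) * (α - β) - 1 < (g (n:ℤ) : ℝ) := by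
        have h2 : (((n:ℤ):ℝ) + 1) * α - 1 < ⌊(((n:ℤ):ℝ) + 1) * α⌋ := Int.sub_one_lt_floor _
        have h3 : (⌊(((n:ℤ):ℝ) + 1) * β⌋ : ℝ) ≤ (((n:ℤ):ℝ) + 1) * β := Int.floor_le _
        have hge : (g (n:ℤ) : ℝ) = (⌊(((n:ℤ):ℝ) + 1) * α⌋ : ℝ) - (⌊(((n:ℤ):ℝ) + 1) * β⌋ : ℝ) := by
          simp [hg]
        rw [hge]
        push_cast at h2 h3 ⊢
        nlinarith
      have hb2 := hgbd (n : ℤ)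
      push_cast at hb2 hfloor hlarge
      linarith
    have hinj : Function.Injective (fun α : ℝ => (QuotientAddGroup.mk (F α) : bddZCoinv)) := by
      intro α β h
      exact le_antisymm (key α β h) (key β α h.symm)
    have : Countable ℝ := Function.Injective.countable hinj
    exact Cardinal.not_countable_real Set.countable_univ
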